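/- Suppose V(r₀, T) = V(r₀, 0) for all r₀, V(r₀,0) = ν_m r₀^m + O(r₀^{m+1}) with ν_m ≠ 0, Π(r₀) = r₀ + c_k r₀^k + O(r₀^{k+1}) with c_k ≠ 0 and k ≥ 2, and the identity V(Π(r₀), T) = V(r₀,0) Π'(r₀) holds. Then k = m. -/

import Mathlib

open Asymptotics Filter Topology

private lemma fac0 {f : ℝ → ℝ} (hf : AnalyticAt ℝ f 0) (h0 : f 0 = 0) :
    ∃ g : ℝ → ℝ, AnalyticAt ℝ g 0 ∧ ∀ x, f x = x * g x := by
  obtain ⟨p, hp⟩ := hf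
  refine ⟨dslope f 0, ⟨p.fslope, hp.has_fpower_series_dslope_fslope⟩, fun x => ?_⟩
  rcases eq_or_ne x 0 with rfl | hx
  · simp [h0]
  · rw [dslope_of_ne _ hx, slope_def_field]
    field_simp [h0]
    simp [h0, mul_comm]

private lemma facN (n : ℕ) : ∀ {f : ℝ → ℝ}, AnalyticAt ℝ f 0 →
    f =O[nhds (0:ℝ)] (fun x => x ^ n) →
    ∃ g : ℝ → ℝ, AnalyticAt ℝ g 0 ∧ ∀ x, f x = x ^ n * g x := by
  induction n with
  | zero => exact fun hf _ => ⟨_, hf, fun x => by simp⟩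
  | succ n ih =>
    intro f hf h
    have hmono : (fun x : ℝ => x ^ (n+1)) =O[nhds (0:ℝ)] fun x => x ^ n := by
      rw [Asymptotics.isBigO_iff]
      refine ⟨1, ?_⟩
      filter_upwards [Metric.ball_mem_nhds (0:ℝ) one_pos] with x hx
      have hx1 : |x| ≤ 1 := by
        simpa [Real.dist_eq] using le_of_lt (Metric.mem_ball.mp hx)
      simp only [Real.norm_eq_abs, abs_pow, abs_mul, pow_succ, one_mul]
      exact mul_le_of_le_one_right (pow_nonneg (abs_nonneg x) n) hx1
    obtain ⟨g, hg, hfg⟩ := ih hf (h.trans hmono)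
    obtain ⟨C, hC⟩ := h.bound
    have hg0 : g 0 = 0 := by
      have key : ∀ᶠ x in 𝓝[≠] (0:ℝ), |g x| ≤ C * |x| := by
        filter_upwards [eventually_nhdsWithin_of_eventually_nhds hC,
          self_mem_nhdsWithin] with x hx hx0
        have hpos : (0:ℝ) < |x| ^ n := pow_pos (abs_pos.mpr hx0) n
        have h1 : |x| ^ n * |g x| ≤ |x| ^ n * (C * |x|) := by
          have : |f x| = |x| ^ n * |g x| := by rw [hfg x, abs_mul, abs_pow]
          calc |x| ^ n * |g x| = |f x| := this.symm
            _ ≤ C * |x| ^ (n+1) := by simpa [Real.norm_eq_abs, abs_pow] using hx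
            _ = |x| ^ n * (C * |x|) := by ring
        exact le_of_mul_le_mul_left h1 hpos
      have t1 : Filter.Tendsto g (𝓝[≠] (0:ℝ)) (nhds 0) := by
        have habs : Filter.Tendsto (fun x : ℝ => C * |x|) (𝓝[≠] (0:ℝ)) (nhds 0) := by
          have : Filter.Tendsto (fun x : ℝ => C * |x|) (nhds (0:ℝ)) (nhds (C * |(0:ℝ)|)) :=
            (continuous_const.mul continuous_abs).tendsto 0
          simpa using this.mono_left nhdsWithin_le_nhds
        refine squeeze_zero_norm' ?_ habs
        simpa [Real.norm_eq_abs] using key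
      have t2 : Filter.Tendsto g (𝓝[≠] (0:ℝ)) (nhds (g 0)) :=
        hg.continuousAt.continuousWithinAt
      exact tendsto_nhds_unique t2 t1
    obtain ⟨g', hg', hgg'⟩ := fac0 hg hg0
    exact ⟨g', hg', fun x => by rw [hfg x, hgg' x]; ring⟩

/-- If `V(·,T) = V(·,0)`, `V(r₀,0) = ν r₀^m + O(r₀^{m+1})` with `ν ≠ 0`,
the Poincaré map satisfies `Π(r₀) = r₀ + c r₀^k + O(r₀^{k+1})` with `c ≠ 0`, `k ≥ 2`,
and the identity `V(Π(r₀),T) = V(r₀,0) Π'(r₀)` holds near `0`, then `k = m`. -/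
theorem stmt_3
    (T : ℝ) (V : ℝ → ℝ → ℝ) (P : ℝ → ℝ) (ν c : ℝ) (m k : ℕ)
    (hm : 1 ≤ m) (hk : 2 ≤ k) (hν : ν ≠ 0) (hc : c ≠ 0)
    (hVT : ∀ r₀ : ℝ, V r₀ T = V r₀ 0)
    (hVan : AnalyticAt ℝ (fun r₀ => V r₀ 0) 0)
    (hPan : AnalyticAt ℝ P 0)
    (hP0 : P 0 = 0) (hP0' : deriv P 0 = 1)
    (hVexp : (fun r₀ => V r₀ 0 - ν * r₀ ^ m) =O[nhds (0 : ℝ)] fun r₀ => r₀ ^ (m + 1))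
    (hPexp : (fun r₀ => P r₀ - (r₀ + c * r₀ ^ k)) =O[nhds (0 : ℝ)] fun r₀ => r₀ ^ (k + 1))
    (hid : ∀ᶠ r₀ in nhds (0 : ℝ), V (P r₀) T = V r₀ 0 * deriv P r₀) :
    k = m := by
  obtain ⟨n, rfl⟩ := Nat.exists_eq_add_of_le' hm
  obtain ⟨l, rfl⟩ := Nat.exists_eq_add_of_le' hk
  -- factor V · 0
  have hWE : AnalyticAt ℝ (fun x : ℝ => V x 0 - ν * x ^ (n+1)) 0 :=
    hVan.sub (analyticAt_const.mul (analyticAt_id.pow _))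
  obtain ⟨E, hEan, hE⟩ := facN (n+1+1) hWE hVexp
  obtain ⟨A, hAdef⟩ : ∃ A : ℝ → ℝ, A = fun x => ν + x * E x := ⟨_, rfl⟩
  have hAx : ∀ x, A x = ν + x * E x := fun x => by rw [hAdef]
  have hAan : AnalyticAt ℝ A 0 := by
    rw [hAdef]; exact analyticAt_const.add (analyticAt_id.mul hEan)
  have hW : ∀ x : ℝ, V x 0 = x ^ (n+1) * A x := fun x => by
    rw [hAx x]; linear_combination (hE x)
  -- factor P
  have hPQ : AnalyticAt ℝ (fun x : ℝ => P x - (x + c * x ^ (l+2))) 0 :=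
    hPan.sub (analyticAt_id.add (analyticAt_const.mul (analyticAt_id.pow _)))
  obtain ⟨Q, hQan, hQ⟩ := facN (l+2+1) hPQ hPexp
  obtain ⟨C, hCdef⟩ : ∃ C : ℝ → ℝ, C = fun x => c + x * Q x := ⟨_, rfl⟩
  have hCx : ∀ x, C x = c + x * Q x := fun x => by rw [hCdef]
  have hCan : AnalyticAt ℝ C 0 := by
    rw [hCdef]; exact analyticAt_const.add (analyticAt_id.mul hQan)
  obtain ⟨B, hBdef⟩ : ∃ B : ℝ → ℝ, B = fun x => 1 + x ^ (l+1) * C x := ⟨_, rfl⟩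
  have hBx : ∀ x, B x = 1 + x ^ (l+1) * C x := fun x => by rw [hBdef]
  have hBan : AnalyticAt ℝ B 0 := by
    rw [hBdef]; exact analyticAt_const.add ((analyticAt_id.pow _).mul hCan)
  have hP : ∀ x : ℝ, P x = x * B x := fun x => by
    rw [hBx x, hCx x]; linear_combination (hQ x)
  -- derivative of P
  have hdQan : ContinuousAt (deriv Q) 0 := by
    have h1 : ContinuousAt (fderiv ℝ Q) 0 := hQan.fderiv.continuousAt
    have h2 : ContinuousAt (fun y => (ContinuousLinearMap.apply ℝ ℝ (1:ℝ)) (fderiv ℝ Q y)) 0 :=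
      ((ContinuousLinearMap.apply ℝ ℝ (1:ℝ)).continuous.continuousAt).comp h1
    have h3 : deriv Q = fun y => (ContinuousLinearMap.apply ℝ ℝ (1:ℝ)) (fderiv ℝ Q y) := by
      funext y
      rfl
    rw [h3]; exact h2
  obtain ⟨C2, hC2def⟩ : ∃ C2 : ℝ → ℝ,
      C2 = fun x => c * ((l:ℝ)+2) + (((l:ℝ)+3) * (x * Q x) + x^2 * deriv Q x) := ⟨_, rfl⟩
  have hC2x : ∀ x, C2 x = c * ((l:ℝ)+2) + (((l:ℝ)+3) * (x * Q x) + x^2 * deriv Q x) :=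
    fun x => by rw [hC2def]
  have hC2cont : ContinuousAt C2 0 := by
    rw [hC2def]
    exact continuousAt_const.add
      ((continuousAt_const.mul (continuousAt_id.mul hQan.continuousAt)).add
        ((continuousAt_id.pow 2).mul hdQan))
  have hPfun : P = fun y => y + (c * y ^ (l+2) + y ^ (l+3) * Q y) :=
    funext fun y => by linear_combination (hQ y)
  have hQev : ∀ᶠ x in nhds (0:ℝ), DifferentiableAt ℝ Q x :=
    hQan.eventually_analyticAt.mono fun x hx => hx.differentiableAt
  have hderiv : ∀ᶠ x in nhds (0:ℝ), deriv P x = 1 + x ^ (l+1) * C2 x := by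
    filter_upwards [hQev] with x hx
    have h2 : HasDerivAt P (1 + (c * (((l:ℝ)+2) * x ^ (l+1)) +
        ((((l:ℝ)+3) * x ^ (l+2)) * Q x + x ^ (l+3) * deriv Q x))) x := by
      rw [hPfun]
      have hb := ((hasDerivAt_pow (l+2) x).const_mul c).add
        ((hasDerivAt_pow (l+3) x).mul hx.hasDerivAt)
      have ha := (hasDerivAt_id x).add hb
      refine ha.congr_deriv ?_
      norm_num
    rw [h2.deriv, hC2x x]
    ring
  -- Lipschitz bound for A near 0, giving A(P x) - A x = O(x^(l+2))
  obtain ⟨K, t, ht, hlip⟩ := hAan.contDiffAt.exists_lipschitzOnWith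
  have hHan : AnalyticAt ℝ (fun x => A (P x) - A x) 0 := by
    have h1 : AnalyticAt ℝ A (P 0) := by rwa [hP0]
    exact (h1.comp hPan).sub hAan
  have hHO : (fun x => A (P x) - A x) =O[nhds (0:ℝ)] fun x : ℝ => x ^ (l+2) := by
    have hPt : ∀ᶠ x in nhds (0:ℝ), P x ∈ t :=
      hPan.continuousAt.preimage_mem_nhds (by rwa [hP0])
    have h1 : (fun x => A (P x) - A x) =O[nhds (0:ℝ)] fun x => P x - x := by
      rw [Asymptotics.isBigO_iff]
      refine ⟨K, ?_⟩
      filter_upwards [hPt, ht] with x h1 h2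
      simpa [Real.norm_eq_abs, Real.dist_eq] using hlip.dist_le_mul (P x) h1 x h2
    have h2 : (fun x : ℝ => P x - x) =O[nhds (0:ℝ)] fun x : ℝ => x ^ (l+2) := by
      have he : (fun x : ℝ => P x - x) = fun x => x ^ (l+2) * C x := by
        funext x; rw [hCx x]; linear_combination (hQ x)
      rw [he]
      have hC1 : C =O[nhds (0:ℝ)] (fun _ : ℝ => (1:ℝ)) :=
        hCan.continuousAt.isBigO_one ℝ
      simpa using (Asymptotics.isBigO_refl (fun x : ℝ => x ^ (l+2)) (nhds 0)).mul hC1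
    exact h1.trans h2
  obtain ⟨M, hMan, hM⟩ := facN (l+2) hHan hHO
  -- the sum function
  obtain ⟨S, hSdef⟩ : ∃ S : ℝ → ℝ, S = fun x => ∑ i ∈ Finset.range (n+1), B x ^ i := ⟨_, rfl⟩
  have hSx : ∀ x, S x = ∑ i ∈ Finset.range (n+1), B x ^ i := fun x => by rw [hSdef]
  have hScont : ContinuousAt S 0 := by
    rw [hSdef]
    exact tendsto_finset_sum _ fun i _ => hBan.continuousAt.pow i
  -- the key identity
  have key : ∀ᶠ x in nhds (0:ℝ),
      x ^ (n+1) * (x ^ (l+1) * (C x * S x * A x + x * (M x * B x ^ (n+1)) - C2 x * A x)) = 0 := by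
    filter_upwards [hid, hderiv] with x h1 h2
    rw [hVT (P x), hW (P x), hW x, h2, hP x, mul_pow] at h1
    have h3 := hM x
    rw [hP x] at h3
    have hgeom : S x * (B x - 1) = B x ^ (n+1) - 1 := by
      rw [hSx x]; exact geom_sum_mul (B x) (n+1)
    have he7 : B x = 1 + x ^ (l+1) * C x := hBx x
    linear_combination h1 + x ^ (n+1) * (A x) * hgeom
      - x ^ (n+1) * (S x) * (A x) * he7 - x ^ (n+1) * (B x) ^ (n+1) * h3
  have hpunct : ∀ᶠ x in 𝓝[≠] (0:ℝ),
      C x * S x * A x + x * (M x * B x ^ (n+1)) - C2 x * A x = 0 := by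
    filter_upwards [eventually_nhdsWithin_of_eventually_nhds key,
      self_mem_nhdsWithin] with x hx hx0
    have hx0' : x ≠ 0 := hx0
    rcases mul_eq_zero.mp hx with h | h
    · exact absurd h (pow_ne_zero _ hx0')
    rcases mul_eq_zero.mp h with h' | h'
    · exact absurd h' (pow_ne_zero _ hx0')
    · exact h'
  -- take the limit
  have hGcont : ContinuousAt
      (fun x => C x * S x * A x + x * (M x * B x ^ (n+1)) - C2 x * A x) 0 :=
    (((hCan.continuousAt.mul hScont).mul hAan.continuousAt).add
      (continuousAt_id.mul (hMan.continuousAt.mul (hBan.continuousAt.pow _)))).sub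
      (hC2cont.mul hAan.continuousAt)
  have hG0 : C 0 * S 0 * A 0 + 0 * (M 0 * B 0 ^ (n+1)) - C2 0 * A 0 = 0 := by
    have t1 : Filter.Tendsto
        (fun x => C x * S x * A x + x * (M x * B x ^ (n+1)) - C2 x * A x)
        (𝓝[≠] (0:ℝ)) (nhds (C 0 * S 0 * A 0 + 0 * (M 0 * B 0 ^ (n+1)) - C2 0 * A 0)) :=
      hGcont.continuousWithinAt
    have t2 : Filter.Tendsto
        (fun x => C x * S x * A x + x * (M x * B x ^ (n+1)) - C2 x * A x)
        (𝓝[≠] (0:ℝ)) (nhds 0) :=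
      Filter.Tendsto.congr' (hpunct.mono fun x hx => hx.symm) tendsto_const_nhds
    exact tendsto_nhds_unique t1 t2
  have hB0 : B 0 = 1 := by rw [hBx 0]; simp
  have hval : c * ((n:ℝ)+1) * ν - c * ((l:ℝ)+2) * ν = 0 := by
    have hC0 : C 0 = c := by rw [hCx 0]; simp
    have hS0 : S 0 = (n:ℝ)+1 := by rw [hSx 0, hB0]; simp
    have hA0 : A 0 = ν := by rw [hAx 0]; simp
    have hC20 : C2 0 = c * ((l:ℝ)+2) := by rw [hC2x 0]; simp
    rw [hC0, hS0, hA0, hC20] at hG0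
    linarith [hG0]
  have hcast : ((n:ℝ)+1) = ((l:ℝ)+2) := by
    have h := mul_eq_zero.mp (show c * ν * (((n:ℝ)+1) - ((l:ℝ)+2)) = 0 by linarith [hval])
    rcases h with h | h
    · exact absurd h (mul_ne_zero hc hν)
    · linarith [h]
  have : n + 1 = l + 2 := by exact_mod_cast hcast
  omega
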